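/- Let (Ω, 𝓔) be a measurable space, H a separable complex Hilbert space, and T : Ω → (H →ₗ.[ℂ] H) a random closed operator such that each T ω is densely defined. Then the adjoint map ω ↦ (T ω)† is a random closed operator: each graph of (T ω)† is a closed subspace of H × H, and {ω | ((graph of (T ω)† : Set (H × H)) ∩ V).Nonempty} is measurable for every open V ⊆ H × H. -/

import Mathlib

open Set Metric Submodule
open scoped InnerProductSpace

noncomputable section RandomAdjointAux

variable {H : Type*} [NormedAddCommGroup H] [InnerProductSpace ℂ H]

/-- The map `(x, y) ↦ (-y, x)` from `H × H` to the L2 product, as a continuous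
linear equivalence. -/
def flipL2 (H : Type*) [NormedAddCommGroup H] [InnerProductSpace ℂ H] :
    (H × H) ≃L[ℂ] WithLp 2 (H × H) where
  toLinearEquiv :=
    ((LinearEquiv.prodComm ℂ H H).trans
      ((LinearEquiv.neg ℂ).prodCongr (LinearEquiv.refl ℂ H))).trans
      (WithLp.linearEquiv 2 ℂ (H × H)).symm
  continuous_toFun := by
    exact (WithLp.prod_continuous_toLp 2 H H).comp
      ((continuous_snd.neg).prodMk continuous_fst)
  continuous_invFun := by
    exact ((continuous_snd.comp (WithLp.prod_continuous_ofLp 2 H H)).prodMk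
      ((continuous_fst.comp (WithLp.prod_continuous_ofLp 2 H H)).neg))

variable {E : Type*} [NormedAddCommGroup E] [InnerProductSpace ℂ E]

lemma aux_ball_inter_orthogonal (K : Submodule ℂ E) [CompleteSpace K] (q : E) (r : ℝ) :
    ((Kᗮ : Set E) ∩ Metric.ball q r).Nonempty ↔
      ‖(orthogonalProjection K q : E)‖ < r := by
  constructor
  · rintro ⟨p, hpK, hpb⟩
    have h0 : orthogonalProjection K p = 0 :=
      orthogonalProjection_mem_subspace_orthogonalComplement_eq_zero hpK
    have : ‖(orthogonalProjection K q : E)‖ = ‖(orthogonalProjection K (q - p) : E)‖ := by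
      rw [map_sub, h0, sub_zero]
    rw [this]
    calc ‖(orthogonalProjection K (q - p) : E)‖
        ≤ ‖orthogonalProjection K‖ * ‖q - p‖ := (orthogonalProjection K).le_opNorm _
      _ ≤ 1 * ‖q - p‖ :=
          mul_le_mul_of_nonneg_right (orthogonalProjection_norm_le K) (norm_nonneg _)
      _ = ‖q - p‖ := one_mul _
      _ < r := by rw [← dist_eq_norm, dist_comm]; exact mem_ball.mp hpb
  · intro h
    refine ⟨q - orthogonalProjection K q, K.sub_starProjection_mem_orthogonal q, ?_⟩
    rw [mem_ball, dist_eq_norm]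
    simpa using h

lemma aux_lt_norm_proj_iff (K : Submodule ℂ E) [CompleteSpace K] (q : E) {s : ℝ}
    (hs : 0 ≤ s) :
    s < ‖(orthogonalProjection K q : E)‖ ↔
      ((K : Set E) ∩ {w | ‖w‖ < 1 ∧ s < ‖(⟪q, w⟫_ℂ)‖}).Nonempty := by
  set P : E := (orthogonalProjection K q : E) with hP
  have hPK : P ∈ K := (orthogonalProjection K q).2
  have hceq : ∀ w ∈ K, ⟪q, w⟫_ℂ = ⟪P, w⟫_ℂ := by
    intro w hw
    have h1 : ⟪q - P, w⟫_ℂ = 0 :=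
      Submodule.inner_left_of_mem_orthogonal hw (K.sub_starProjection_mem_orthogonal q)
    rw [inner_sub_left, sub_eq_zero] at h1
    exact h1
  constructor
  · intro h
    have hN : 0 < ‖P‖ := lt_of_le_of_lt hs h
    set t : ℝ := (s + ‖P‖) / 2 with ht
    have hst : s < t := by rw [ht]; linarith
    have htN : t < ‖P‖ := by rw [ht]; linarith
    have ht0 : 0 < t := lt_of_le_of_lt hs hst
    refine ⟨((t / ‖P‖ ^ 2 : ℝ) : ℂ) • P, ?_, ?_, ?_⟩
    · exact K.smul_mem _ hPK
    · rw [norm_smul]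
      simp only [Complex.norm_real, Real.norm_eq_abs]
      rw [abs_of_pos (by positivity)]
      rw [div_mul_eq_mul_div, sq]
      rw [div_lt_one (by positivity)]
      calc t * ‖P‖ < ‖P‖ * ‖P‖ := by nlinarith
        _ ≤ ‖P‖ * ‖P‖ := le_refl _
    · have : ⟪q, ((t / ‖P‖ ^ 2 : ℝ) : ℂ) • P⟫_ℂ = ((t / ‖P‖ ^ 2 : ℝ) : ℂ) * ⟪q, P⟫_ℂ := by
        rw [inner_smul_right]
      have hqP : ⟪q, P⟫_ℂ = (‖P‖ : ℂ) ^ 2 := by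
        rw [hceq P hPK, inner_self_eq_norm_sq_to_K]
        norm_cast
      simp only [this, hqP, mem_setOf_eq]
      rw [norm_mul]
      simp only [Complex.norm_real, Real.norm_eq_abs]
      rw [abs_of_pos (by positivity)]
      have : ‖((‖P‖ : ℂ)) ^ 2‖ = ‖P‖ ^ 2 := by
        rw [norm_pow, Complex.norm_real, Real.norm_eq_abs, abs_of_nonneg (norm_nonneg _)]
      rw [this, div_mul_cancel₀]
      · exact hst
      · positivity
  · rintro ⟨w, hwK, hw1, hws⟩
    have : ‖(⟪q, w⟫_ℂ)‖ = ‖(⟪P, w⟫_ℂ)‖ := by rw [hceq w hwK]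
    rw [this] at hws
    calc s < ‖(⟪P, w⟫_ℂ)‖ := hws
      _ ≤ ‖P‖ * ‖w‖ := norm_inner_le_norm _ _
      _ ≤ ‖P‖ * 1 := mul_le_mul_of_nonneg_left hw1.le (norm_nonneg _)
      _ = ‖P‖ := mul_one _

/-- Characterization of the graph of the adjoint. -/
lemma aux_mem_adjoint_graph_iff [CompleteSpace H] (T : H →ₗ.[ℂ] H) (hT : Dense (T.domain : Set H))
    (y z : H) :
    (y, z) ∈ T.adjoint.graph ↔ ∀ x : T.domain, ⟪z, (x : H)⟫_ℂ = ⟪y, T x⟫_ℂ := by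
  rw [LinearPMap.mem_graph_iff]
  constructor
  · rintro ⟨u, hu, hTu⟩
    intro x
    calc ⟪z, (x : H)⟫_ℂ = ⟪T.adjoint u, (x : H)⟫_ℂ := by rw [hTu]
      _ = ⟪(u : H), T x⟫_ℂ := LinearPMap.adjoint_isFormalAdjoint hT u x
      _ = ⟪y, T x⟫_ℂ := by rw [hu]
  · intro h
    have hy : y ∈ T.adjoint.domain :=
      LinearPMap.mem_adjoint_domain_of_exists y ⟨z, h⟩
    exact ⟨⟨y, hy⟩, rfl, LinearPMap.adjoint_apply_eq hT ⟨y, hy⟩ h⟩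

end RandomAdjointAux

/-- The adjoint of a (densely defined) random closed operator is a random
closed operator: each adjoint graph is closed, and the hit sets of the adjoint
graphs by open subsets of `H × H` are measurable. -/
theorem adjoint_of_random_closed_operator_is_random
    {Ω : Type*} [MeasurableSpace Ω]
    {H : Type*} [NormedAddCommGroup H] [InnerProductSpace ℂ H] [CompleteSpace H]
    [SecondCountableTopology H]
    (T : Ω → (H →ₗ.[ℂ] H))
    (hclosed : ∀ ω, IsClosed ((T ω).graph : Set (H × H)))
    (hdense : ∀ ω, Dense (((T ω).domain : Set H)))
    (hrandom : ∀ V : Set (H × H), IsOpen V →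
      MeasurableSet {ω : Ω | (((T ω).graph : Set (H × H)) ∩ V).Nonempty}) :
    (∀ ω, IsClosed (((T ω).adjoint.graph : Set (H × H)))) ∧
    (∀ V : Set (H × H), IsOpen V →
      MeasurableSet {ω : Ω | (((T ω).adjoint.graph : Set (H × H)) ∩ V).Nonempty}) := by
  classical
  set E2 := WithLp 2 (H × H) with hE2
  let Ψ : (H × H) ≃L[ℂ] E2 := flipL2 H
  let eL : E2 ≃L[ℂ] (H × H) := WithLp.prodContinuousLinearEquiv 2 ℂ H H
  haveI : SecondCountableTopology E2 := eL.toHomeomorph.isEmbedding.secondCountableTopology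
  -- the flipped graphs
  let K : Ω → Submodule ℂ E2 := fun ω => (T ω).graph.map (Ψ.toLinearEquiv : (H × H) →ₗ[ℂ] E2)
  have hKcoe : ∀ ω, (K ω : Set E2) = Ψ '' ((T ω).graph : Set (H × H)) := fun ω => rfl
  have hKclosed : ∀ ω, IsClosed (K ω : Set E2) := by
    intro ω
    rw [hKcoe]
    exact Ψ.toHomeomorph.isClosedMap _ (hclosed ω)
  haveI : ∀ ω, CompleteSpace (K ω) := fun ω => (hKclosed ω).completeSpace_coe
  -- graph identity
  have hgraph : ∀ ω, (((T ω).adjoint.graph : Set (H × H))) = eL '' ((K ω)ᗮ : Set E2) := by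
    intro ω
    ext p
    obtain ⟨y, z⟩ := p
    rw [SetLike.mem_coe, aux_mem_adjoint_graph_iff (T ω) (hdense ω) y z]
    constructor
    · intro h
      refine ⟨eL.symm (y, z), ?_, by simp⟩
      rw [SetLike.mem_coe, Submodule.mem_orthogonal]
      rintro u hu
      rw [← SetLike.mem_coe, hKcoe] at hu
      obtain ⟨⟨a, b⟩, hab, rfl⟩ := hu
      rw [SetLike.mem_coe, LinearPMap.mem_graph_iff] at hab
      obtain ⟨x, hxa, hxb⟩ := hab
      have : ⟪(Ψ (a, b) : E2), eL.symm (y, z)⟫_ℂ = ⟪-b, y⟫_ℂ + ⟪a, z⟫_ℂ := by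
        rw [WithLp.prod_inner_apply]; rfl
      rw [this]
      subst hxa; subst hxb
      have h1 := h x
      have h2 : ⟪(x : H), z⟫_ℂ = ⟪T ω x, y⟫_ℂ := by
        have := congrArg (starRingEnd ℂ) h1
        simpa [inner_conj_symm] using this
      rw [inner_neg_left, h2]
      ring
    · rintro ⟨u, hu, huyz⟩ x
      rw [SetLike.mem_coe, Submodule.mem_orthogonal] at hu
      have hx : (Ψ ((x : H), T ω x) : E2) ∈ (K ω : Set E2) := by
        rw [hKcoe]
        exact ⟨((x : H), T ω x), (T ω).mem_graph x, rfl⟩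
      have h0 := hu _ hx
      have huE : u = eL.symm (y, z) := by
        apply eL.injective; simp [huyz]
      rw [huE] at h0
      have : ⟪(Ψ ((x : H), T ω x) : E2), eL.symm (y, z)⟫_ℂ
          = ⟪-(T ω x), y⟫_ℂ + ⟪(x : H), z⟫_ℂ := by
        rw [WithLp.prod_inner_apply]; rfl
      rw [this] at h0
      have h2 : ⟪(x : H), z⟫_ℂ = ⟪T ω x, y⟫_ℂ := by
        rw [inner_neg_left] at h0; linear_combination h0
      have := congrArg (starRingEnd ℂ) h2
      simpa [inner_conj_symm] using this
  refine ⟨?_, ?_⟩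
  · intro ω
    rw [hgraph ω]
    exact eL.toHomeomorph.isClosedMap _ (Submodule.isClosed_orthogonal _)
  · intro V hV
    -- transfer to E2
    have htrans : {ω : Ω | (((T ω).adjoint.graph : Set (H × H)) ∩ V).Nonempty}
        = {ω : Ω | (((K ω)ᗮ : Set E2) ∩ (eL ⁻¹' V)).Nonempty} := by
      ext ω
      rw [mem_setOf_eq, mem_setOf_eq, hgraph ω, Set.image_inter_nonempty_iff]
    rw [htrans]
    have hV' : IsOpen ((eL : E2 → H × H) ⁻¹' V) := hV.preimage eL.continuous
    set V' : Set E2 := (eL : E2 → H × H) ⁻¹' V with hV'def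
    -- hit sets of K are measurable
    have hKhit : ∀ U : Set E2, IsOpen U →
        MeasurableSet {ω : Ω | ((K ω : Set E2) ∩ U).Nonempty} := by
      intro U hU
      have : {ω : Ω | ((K ω : Set E2) ∩ U).Nonempty}
          = {ω : Ω | (((T ω).graph : Set (H × H)) ∩ ((Ψ : (H × H) → E2) ⁻¹' U)).Nonempty} := by
        ext ω
        rw [mem_setOf_eq, mem_setOf_eq, hKcoe ω, Set.image_inter_nonempty_iff]
      rw [this]
      exact hrandom _ (hU.preimage Ψ.continuous)
    -- measurability of projection norm level sets
    have hproj : ∀ (q : E2) (s : ℝ), 0 ≤ s →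
        MeasurableSet {ω : Ω | s < ‖(orthogonalProjection (K ω) q : E2)‖} := by
      intro q s hs
      have heq : {ω : Ω | s < ‖(orthogonalProjection (K ω) q : E2)‖}
          = {ω : Ω | ((K ω : Set E2) ∩ {w : E2 | ‖w‖ < 1 ∧ s < ‖(⟪q, w⟫_ℂ)‖}).Nonempty} := by
        ext ω
        exact aux_lt_norm_proj_iff (K ω) q hs
      rw [heq]
      apply hKhit
      have h1 : IsOpen {w : E2 | ‖w‖ < 1} := isOpen_Iio.preimage continuous_norm
      have h2 : IsOpen {w : E2 | s < ‖(⟪q, w⟫_ℂ)‖} := by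
        have hc : Continuous fun w : E2 => ‖(⟪q, w⟫_ℂ)‖ :=
          continuous_norm.comp (innerSL ℂ q).continuous
        exact isOpen_Ioi.preimage hc
      exact h1.inter h2
    -- hit sets of `Kᗮ` by balls are measurable
    have hball : ∀ (q : E2) (r : ℝ),
        MeasurableSet {ω : Ω | (((K ω)ᗮ : Set E2) ∩ Metric.ball q r).Nonempty} := by
      intro q r
      have heq : {ω : Ω | (((K ω)ᗮ : Set E2) ∩ Metric.ball q r).Nonempty}
          = ⋃ (s : ℚ), ⋃ (_ : 0 ≤ (s : ℝ) ∧ (s : ℝ) < r),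
              {ω : Ω | (s : ℝ) < ‖(orthogonalProjection (K ω) q : E2)‖}ᶜ := by
        ext ω
        simp only [mem_iUnion, mem_compl_iff, mem_setOf_eq, not_lt]
        rw [aux_ball_inter_orthogonal (K ω) q r]
        constructor
        · intro h
          obtain ⟨s, hs1, hs2⟩ := exists_rat_btwn h
          exact ⟨s, ⟨le_trans (norm_nonneg _) hs1.le, hs2⟩, hs1.le⟩
        · rintro ⟨s, ⟨_, hs2⟩, hns⟩
          exact lt_of_le_of_lt hns hs2
      rw [heq]
      refine MeasurableSet.iUnion fun s => MeasurableSet.iUnion fun hs => ?_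
      exact (hproj q s hs.1).compl
    haveI : Nonempty E2 := ⟨0⟩
    set D : ℕ → E2 := TopologicalSpace.denseSeq E2 with hDdef
    have hD : DenseRange D := TopologicalSpace.denseRange_denseSeq E2
    have hmain : {ω : Ω | (((K ω)ᗮ : Set E2) ∩ V').Nonempty}
        = ⋃ (n : ℕ), ⋃ (s : ℚ), ⋃ (_ : Metric.ball (D n) (s : ℝ) ⊆ V'),
            {ω : Ω | (((K ω)ᗮ : Set E2) ∩ Metric.ball (D n) (s : ℝ)).Nonempty} := by
      ext ω
      simp only [mem_iUnion, mem_setOf_eq]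
      constructor
      · rintro ⟨p, hpK, hpV⟩
        obtain ⟨ε, hε, hballp⟩ := Metric.isOpen_iff.mp hV' p hpV
        obtain ⟨s, hs0, hsε⟩ := exists_rat_btwn (by positivity : (0 : ℝ) < ε / 2)
        obtain ⟨n, hn⟩ := Metric.denseRange_iff.mp hD p s (by exact_mod_cast hs0)
        refine ⟨n, s, ?_, p, hpK, ?_⟩
        · intro w hw
          apply hballp
          rw [Metric.mem_ball] at hw ⊢
          calc dist w p ≤ dist w (D n) + dist (D n) p := dist_triangle _ _ _
            _ < (s : ℝ) + (s : ℝ) := add_lt_add hw (by rw [dist_comm]; exact hn)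
            _ < ε := by linarith
        · rw [Metric.mem_ball]; exact hn
      · rintro ⟨n, s, hsub, p, hpK, hpb⟩
        exact ⟨p, hpK, hsub hpb⟩
    rw [hmain]
    exact MeasurableSet.iUnion fun n => MeasurableSet.iUnion fun s =>
      MeasurableSet.iUnion fun _ => hball (D n) (s : ℝ)
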